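/- arXiv:1810.05594 — 8 statements merged into one kernel-verified Lean document; each statement's English description precedes it below -/
import Mathlib

section
/- For fixed x with δ = x^T Σ^{-1} x > 0, as ν → 0⁺ the Student-t density with μ = 0 satisfies lim_{ν→0} f_ν(x|0,Σ) = 0, while the modified quantity (1/2)·Γ(ν/2)·(1+δ/ν)^{ν/2}·f_ν(x|0,Σ) converges to Γ(d/2)/(2 π^{d/2}) · |Σ|^{-1/2} δ^{-d/2}, the density of the projected normal distribution on the sphere. -/
open Real Filter Matrix

private lemma gammaContAt {s : ℝ} (hs : 0 < s) : ContinuousAt Real.Gamma s := by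
  refine (Real.differentiableAt_Gamma fun m => ?_).continuousAt
  intro h
  have : (0:ℝ) ≤ (m:ℝ) := Nat.cast_nonneg m
  nlinarith [hs, h]

private lemma rpow_self_tendsto : Tendsto (fun ν : ℝ => ν ^ (ν / 2)) (nhdsWithin 0 (Set.Ioi 0)) (nhds 1) := by
  have h0 : Tendsto (fun ν : ℝ => Real.log ν * ν / 2) (nhdsWithin 0 (Set.Ioi 0)) (nhds 0) := by
    have := (tendsto_log_mul_rpow_nhdsGT_zero (r := 1) one_pos).div_const 2
    simpa using this
  have h1 : Tendsto (fun ν : ℝ => Real.exp (Real.log ν * (ν / 2)))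
      (nhdsWithin 0 (Set.Ioi 0)) (nhds 1) := by
    have := (Real.continuous_exp.continuousAt (x := 0)).tendsto.comp
      (by simpa [mul_div_assoc] using h0)
    simpa [Function.comp_def] using this
  refine h1.congr' ?_
  filter_upwards [self_mem_nhdsWithin] with ν hν
  rw [Real.rpow_def_of_pos hν]

/-- As `ν → 0⁺`, the Student-t density at a fixed point `x` with `δ = xᵀ Σ⁻¹ x > 0`
tends to zero, while `(1/2) Γ(ν/2) (1+δ/ν)^{ν/2} f_ν(x|0,Σ)` tends to the projected
normal density `Γ(d/2)/(2 π^{d/2}) |Σ|^{-1/2} δ^{-d/2}`. -/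
theorem studentT_density_tendsto_projected_normal
    (d : ℕ) (Sig : Matrix (Fin d) (Fin d) ℝ) (hSig : Sig.PosDef)
    (x : Fin d → ℝ) (hδ : 0 < x ⬝ᵥ Sig⁻¹ *ᵥ x) :
    Tendsto
      (fun ν : ℝ =>
        Real.Gamma ((d + ν) / 2) /
          (Real.Gamma (ν / 2) * (Real.pi * ν) ^ ((d : ℝ) / 2) * Sig.det ^ ((1 : ℝ) / 2)) *
          (1 + (x ⬝ᵥ Sig⁻¹ *ᵥ x) / ν) ^ (-((d + ν) / 2)))
      (nhdsWithin 0 (Set.Ioi 0)) (nhds 0) ∧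
    Tendsto
      (fun ν : ℝ =>
        (1 / 2) * Real.Gamma (ν / 2) * (1 + (x ⬝ᵥ Sig⁻¹ *ᵥ x) / ν) ^ (ν / 2) *
        (Real.Gamma ((d + ν) / 2) /
          (Real.Gamma (ν / 2) * (Real.pi * ν) ^ ((d : ℝ) / 2) * Sig.det ^ ((1 : ℝ) / 2)) *
          (1 + (x ⬝ᵥ Sig⁻¹ *ᵥ x) / ν) ^ (-((d + ν) / 2))))
      (nhdsWithin 0 (Set.Ioi 0))
      (nhds (Real.Gamma ((d : ℝ) / 2) / (2 * Real.pi ^ ((d : ℝ) / 2)) *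
        Sig.det ^ (-(1 : ℝ) / 2) * (x ⬝ᵥ Sig⁻¹ *ᵥ x) ^ (-(d : ℝ) / 2))) := by
  have hd : 0 < d := by
    rcases Nat.eq_zero_or_pos d with h | h
    · subst h; simp [dotProduct] at hδ
    · exact h
  set δ : ℝ := x ⬝ᵥ Sig⁻¹ *ᵥ x with hδdef
  have hdet : 0 < Sig.det := hSig.det_pos
  have hd2 : (0:ℝ) < (d:ℝ) / 2 := by positivity
  -- constant
  set C : ℝ := (Real.pi ^ ((d:ℝ)/2) * Sig.det ^ ((1:ℝ)/2))⁻¹ with hC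
  -- limits of pieces
  have hA : Tendsto (fun ν : ℝ => Real.Gamma (((d:ℝ) + ν) / 2))
      (nhdsWithin 0 (Set.Ioi 0)) (nhds (Real.Gamma ((d:ℝ)/2))) := by
    have hcont : ContinuousAt Real.Gamma ((d:ℝ)/2) := gammaContAt hd2
    have hmap : Tendsto (fun ν : ℝ => ((d:ℝ) + ν) / 2) (nhdsWithin 0 (Set.Ioi 0))
        (nhds ((d:ℝ)/2)) := by
      have : Tendsto (fun ν : ℝ => ((d:ℝ) + ν) / 2) (nhds 0) (nhds (((d:ℝ) + 0)/2)) :=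
        ((continuous_const.add continuous_id).div_const 2).tendsto 0
      simpa using this.mono_left nhdsWithin_le_nhds
    exact hcont.tendsto.comp hmap
  have hB := rpow_self_tendsto
  have hbase : Tendsto (fun ν : ℝ => ν + δ) (nhdsWithin 0 (Set.Ioi 0)) (nhds δ) := by
    have : Tendsto (fun ν : ℝ => ν + δ) (nhds 0) (nhds (0 + δ)) :=
      (continuous_id.add continuous_const).tendsto 0
    simpa using this.mono_left nhdsWithin_le_nhds
  have hC1 : Tendsto (fun ν : ℝ => (ν + δ) ^ (-(((d:ℝ) + ν) / 2)))
      (nhdsWithin 0 (Set.Ioi 0)) (nhds (δ ^ (-((d:ℝ)/2)))) := by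
    have hexp : Tendsto (fun ν : ℝ => -(((d:ℝ) + ν) / 2)) (nhdsWithin 0 (Set.Ioi 0))
        (nhds (-((d:ℝ)/2))) := by
      have : Tendsto (fun ν : ℝ => -(((d:ℝ) + ν) / 2)) (nhds 0) (nhds (-(((d:ℝ) + 0)/2))) :=
        ((continuous_const.add continuous_id).div_const 2).neg.tendsto 0
      simpa using this.mono_left nhdsWithin_le_nhds
    exact hbase.rpow hexp (Or.inl hδ.ne')
  have hC2 : Tendsto (fun ν : ℝ => (ν + δ) ^ (-(d:ℝ) / 2))
      (nhdsWithin 0 (Set.Ioi 0)) (nhds (δ ^ (-(d:ℝ)/2))) :=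
    hbase.rpow tendsto_const_nhds (Or.inl hδ.ne')
  have hInv : Tendsto (fun ν : ℝ => (Real.Gamma (ν / 2))⁻¹)
      (nhdsWithin 0 (Set.Ioi 0)) (nhds 0) := by
    have hden : Tendsto (fun ν : ℝ => Real.Gamma (ν / 2 + 1)) (nhdsWithin 0 (Set.Ioi 0))
        (nhds 1) := by
      have hcont : ContinuousAt Real.Gamma 1 := gammaContAt one_pos
      have hmap : Tendsto (fun ν : ℝ => ν / 2 + 1) (nhds 0) (nhds (1:ℝ)) := by
        have : Tendsto (fun ν : ℝ => ν / 2 + 1) (nhds 0) (nhds ((0:ℝ) / 2 + 1)) :=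
          ((continuous_id.div_const 2).add continuous_const).tendsto 0
        simpa using this
      have := hcont.tendsto.comp
        (hmap.mono_left (nhdsWithin_le_nhds (s := Set.Ioi 0)))
      simpa [Real.Gamma_one, Function.comp_def] using this
    have hnum : Tendsto (fun ν : ℝ => ν / 2) (nhdsWithin 0 (Set.Ioi 0)) (nhds 0) := by
      have : Tendsto (fun ν : ℝ => ν / 2) (nhds 0) (nhds ((0:ℝ) / 2)) :=
        (continuous_id.div_const 2).tendsto 0
      simpa using this.mono_left nhdsWithin_le_nhds
    have hdiv := hnum.div hden one_ne_zero
    refine hdiv.congr' ?_ |>.mono_right (by simp)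
    filter_upwards [self_mem_nhdsWithin] with ν hν
    have hν0 : (0:ℝ) < ν := hν
    have h2 : ν / 2 ≠ 0 := by positivity
    have hΓ : 0 < Real.Gamma (ν / 2) := Real.Gamma_pos_of_pos (by positivity)
    simp only [Pi.div_apply]
    rw [Real.Gamma_add_one h2]
    field_simp
  -- eventual equality for the first function
  have keyeq : ∀ ν : ℝ, 0 < ν →
      Real.Gamma ((d + ν) / 2) /
          (Real.Gamma (ν / 2) * (Real.pi * ν) ^ ((d : ℝ) / 2) * Sig.det ^ ((1 : ℝ) / 2)) *
          (1 + δ / ν) ^ (-((d + ν) / 2)) =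
      Real.Gamma (((d:ℝ) + ν) / 2) * ν ^ (ν / 2) * (ν + δ) ^ (-(((d:ℝ) + ν) / 2)) *
        (Real.Gamma (ν / 2))⁻¹ * C := by
    intro ν hν0
    have hνδ : (0:ℝ) < ν + δ := by positivity
    have h1 : (1:ℝ) + δ / ν = (ν + δ) / ν := by field_simp
    have he : -(((d:ℝ) + ν) / 2) = -(ν / 2 + (d:ℝ) / 2) := by ring
    have hνe : ν ^ (-(((d:ℝ) + ν) / 2)) = (ν ^ (ν / 2) * ν ^ ((d:ℝ) / 2))⁻¹ := by
      rw [he, Real.rpow_neg hν0.le, Real.rpow_add hν0]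
    have hΓ2 : 0 < Real.Gamma (ν / 2) := Real.Gamma_pos_of_pos (by positivity)
    have hpi : (0:ℝ) < Real.pi ^ ((d:ℝ)/2) := Real.rpow_pos_of_pos Real.pi_pos _
    have hdet' : (0:ℝ) < Sig.det ^ ((1:ℝ)/2) := Real.rpow_pos_of_pos hdet _
    have hνν : (0:ℝ) < ν ^ (ν/2) := Real.rpow_pos_of_pos hν0 _
    have hνd : (0:ℝ) < ν ^ ((d:ℝ)/2) := Real.rpow_pos_of_pos hν0 _
    rw [h1, Real.div_rpow hνδ.le hν0.le, Real.mul_rpow Real.pi_pos.le hν0.le, hνe, hC]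
    field_simp
  -- eventual equality for the second function
  have keyeq2 : ∀ ν : ℝ, 0 < ν →
      (1 / 2) * Real.Gamma (ν / 2) * (1 + δ / ν) ^ (ν / 2) *
        (Real.Gamma ((d + ν) / 2) /
          (Real.Gamma (ν / 2) * (Real.pi * ν) ^ ((d : ℝ) / 2) * Sig.det ^ ((1 : ℝ) / 2)) *
          (1 + δ / ν) ^ (-((d + ν) / 2))) =
      (1 / 2) * Real.Gamma (((d:ℝ) + ν) / 2) * (ν + δ) ^ (-(d:ℝ) / 2) * C := by
    intro ν hν0
    have hνδ : (0:ℝ) < ν + δ := by positivity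
    rw [keyeq ν hν0]
    have h1 : (1:ℝ) + δ / ν = (ν + δ) / ν := by field_simp
    have h2 : (ν + δ) ^ (ν / 2) * (ν + δ) ^ (-(((d:ℝ) + ν) / 2)) = (ν + δ) ^ (-(d:ℝ) / 2) := by
      rw [← Real.rpow_add hνδ]; congr 1; ring
    have hΓ2 : 0 < Real.Gamma (ν / 2) := Real.Gamma_pos_of_pos (by positivity)
    have hνν : (0:ℝ) < ν ^ (ν/2) := Real.rpow_pos_of_pos hν0 _
    rw [h1, Real.div_rpow hνδ.le hν0.le]
    rw [← h2]
    field_simp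
  constructor
  · have hlim := ((hA.mul hB).mul hC1).mul hInv |>.mul_const C
    simp only [mul_zero, zero_mul] at hlim
    refine hlim.congr' ?_
    filter_upwards [self_mem_nhdsWithin] with ν hν
    exact (keyeq ν hν).symm
  · have hlim := ((tendsto_const_nhds (x := (1:ℝ)/2)).mul hA).mul hC2 |>.mul_const C
    have heq : (1 / 2) * Real.Gamma ((d:ℝ)/2) * δ ^ (-(d:ℝ)/2) * C =
        Real.Gamma ((d : ℝ) / 2) / (2 * Real.pi ^ ((d : ℝ) / 2)) *
          Sig.det ^ (-(1 : ℝ) / 2) * δ ^ (-(d : ℝ) / 2) := by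
      have hpi : (0:ℝ) < Real.pi ^ ((d:ℝ)/2) := Real.rpow_pos_of_pos Real.pi_pos _
      have hdet' : (0:ℝ) < Sig.det ^ ((1:ℝ)/2) := Real.rpow_pos_of_pos hdet _
      have hneg : Sig.det ^ (-(1:ℝ)/2) = (Sig.det ^ ((1:ℝ)/2))⁻¹ := by
        rw [neg_div, Real.rpow_neg hdet.le]
      rw [hC, hneg]
      field_simp
    rw [← heq]
    refine hlim.congr' ?_
    filter_upwards [self_mem_nhdsWithin] with ν hν
    exact (keyeq2 ν hν).symm
end

section
/- Let x = (cos φ, sin φ)^T and Σ a 2×2 symmetric positive definite matrix with entries σ₁₁, σ₁₂, σ₂₂. Then x^T Σ^{-1} x = (1 - ζ₁ cos(2φ) - ζ₂ sin(2φ)) / (√|Σ| · √(1 - ζ₁² - ζ₂²)), where ζ₁ = (σ₁₁ - σ₂₂)/(σ₁₁ + σ₂₂) and ζ₂ = 2σ₁₂/(σ₁₁ + σ₂₂). -/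
open Real Matrix

/-- For `x = (cos φ, sin φ)ᵀ` and a symmetric positive definite `2×2` matrix `Σ`,
`xᵀ Σ⁻¹ x = (1 - ζ₁ cos 2φ - ζ₂ sin 2φ)/(√|Σ| √(1-ζ₁²-ζ₂²))` where
`ζ₁ = (σ₁₁-σ₂₂)/(σ₁₁+σ₂₂)` and `ζ₂ = 2σ₁₂/(σ₁₁+σ₂₂)`. -/
theorem quadratic_form_circle_param
    (σ11 σ12 σ22 φ : ℝ)
    (hSig : (Matrix.of ![![σ11, σ12], ![σ12, σ22]] : Matrix (Fin 2) (Fin 2) ℝ).PosDef) :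
    (![Real.cos φ, Real.sin φ] ⬝ᵥ
        (Matrix.of ![![σ11, σ12], ![σ12, σ22]] : Matrix (Fin 2) (Fin 2) ℝ)⁻¹ *ᵥ
        ![Real.cos φ, Real.sin φ])
      = (1 - ((σ11 - σ22) / (σ11 + σ22)) * Real.cos (2 * φ)
            - (2 * σ12 / (σ11 + σ22)) * Real.sin (2 * φ)) /
        (Real.sqrt ((Matrix.of ![![σ11, σ12], ![σ12, σ22]] : Matrix (Fin 2) (Fin 2) ℝ).det) *
          Real.sqrt (1 - ((σ11 - σ22) / (σ11 + σ22)) ^ 2 - (2 * σ12 / (σ11 + σ22)) ^ 2)) := by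
  set M : Matrix (Fin 2) (Fin 2) ℝ := Matrix.of ![![σ11, σ12], ![σ12, σ22]] with hM
  have hdetM : M.det = σ11 * σ22 - σ12 ^ 2 := by
    simp [hM, Matrix.det_fin_two]; ring
  have hd : 0 < σ11 * σ22 - σ12 ^ 2 := by
    have := hSig.det_pos
    rwa [hdetM] at this
  have h11 : 0 < σ11 := by
    have := hSig.dotProduct_mulVec_pos (x := ![1, 0]) (by
      intro h
      have := congrFun h 0
      simp at this)
    simpa [hM, Matrix.mulVec, dotProduct, Fin.sum_univ_two] using this
  have h22 : 0 < σ22 := by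
    have := hSig.dotProduct_mulVec_pos (x := ![0, 1]) (by
      intro h
      have := congrFun h 1
      simp at this)
    simpa [hM, Matrix.mulVec, dotProduct, Fin.sum_univ_two] using this
  have ht : 0 < σ11 + σ22 := by linarith
  -- inverse of M
  have hinv : M⁻¹ = Matrix.of ![![σ22 / (σ11 * σ22 - σ12 ^ 2), -σ12 / (σ11 * σ22 - σ12 ^ 2)],
      ![-σ12 / (σ11 * σ22 - σ12 ^ 2), σ11 / (σ11 * σ22 - σ12 ^ 2)]] := by
    apply Matrix.inv_eq_right_inv
    ext i j
    fin_cases i <;> fin_cases j <;>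
      simp [hM, Matrix.mul_apply, Fin.sum_univ_two] <;> field_simp <;> ring
  -- denominator simplification
  have hzeta : 1 - ((σ11 - σ22) / (σ11 + σ22)) ^ 2 - (2 * σ12 / (σ11 + σ22)) ^ 2
      = 4 * (σ11 * σ22 - σ12 ^ 2) / (σ11 + σ22) ^ 2 := by
    field_simp
    ring
  have hden : Real.sqrt M.det *
      Real.sqrt (1 - ((σ11 - σ22) / (σ11 + σ22)) ^ 2 - (2 * σ12 / (σ11 + σ22)) ^ 2)
      = 2 * (σ11 * σ22 - σ12 ^ 2) / (σ11 + σ22) := by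
    rw [hzeta, hdetM, ← Real.sqrt_mul hd.le]
    have : (σ11 * σ22 - σ12 ^ 2) * (4 * (σ11 * σ22 - σ12 ^ 2) / (σ11 + σ22) ^ 2)
        = (2 * (σ11 * σ22 - σ12 ^ 2) / (σ11 + σ22)) ^ 2 := by
      field_simp; ring
    rw [this, Real.sqrt_sq (by positivity)]
  rw [hden, hinv]
  have hs : Real.sin φ ^ 2 = 1 - Real.cos φ ^ 2 := by
    nlinarith [Real.sin_sq_add_cos_sq φ]
  simp only [dotProduct, Matrix.mulVec, Fin.sum_univ_two, Real.cos_two_mul,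
    Real.sin_two_mul, Matrix.of_apply, Matrix.cons_val', Matrix.cons_val_zero,
    Matrix.cons_val_one, Matrix.head_cons, Matrix.empty_val', Matrix.cons_val_fin_one,
    Matrix.head_fin_const]
  have hd' : σ11 * σ22 - σ12 ^ 2 ≠ 0 := hd.ne'
  have hd'' : σ22 * σ11 - σ12 ^ 2 ≠ 0 := by linarith [hd]
  field_simp
  linear_combination (2 * σ11) * Real.sin_sq_add_cos_sq φ
end

section
/- Under Assumption A (any ≤ d of the samples are linearly independent, and (d-1)·max_i w_i < (ν+d-1)/(ν+d)), for every linear subspace V ⊂ ℝ^d with 0 ≤ dim V ≤ d-1, the total weight of samples lying in V satisfies ∑_{i: x_i ∈ V} w_i < (ν + dim V)/(ν + d); moreover n ≥ d. -/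
open Real Matrix Finset Classical

open scoped Classical

/-- Under Assumption A (any `≤ d` samples linearly independent, and
`(d-1)·max wᵢ < (ν+d-1)/(ν+d)`), for every proper linear subspace `V` of `ℝ^d`
the total weight of samples lying in `V` is `< (ν + dim V)/(ν + d)`, and `n ≥ d`. -/
theorem weight_in_subspace_lt
    (d n : ℕ) (ν : ℝ) (hν : 0 < ν)
    (x : Fin n → Fin d → ℝ)
    (w : Fin n → ℝ) (hw : ∀ i, 0 < w i) (hw1 : ∑ i, w i = 1)
    (hli : ∀ s : Finset (Fin n), s.card ≤ d →
      LinearIndependent ℝ (fun i : s => x i))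
    (hwmax : ∀ i, ((d : ℝ) - 1) * w i < (ν + d - 1) / (ν + d)) :
    (∀ V : Submodule ℝ (Fin d → ℝ), Module.finrank ℝ V < d →
      ∑ i ∈ Finset.univ.filter (fun i => x i ∈ V), w i
        < (ν + (Module.finrank ℝ V : ℝ)) / (ν + d)) ∧ n ≥ d := by
  have hd0 : (0:ℝ) < ν + d := by positivity
  have part1 : ∀ V : Submodule ℝ (Fin d → ℝ), Module.finrank ℝ V < d →
      ∑ i ∈ Finset.univ.filter (fun i => x i ∈ V), w i
        < (ν + (Module.finrank ℝ V : ℝ)) / (ν + d) := by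
    intro V hV
    set k := Module.finrank ℝ V with hkdef
    set S := Finset.univ.filter (fun i : Fin n => x i ∈ V) with hSdef
    have hcard : S.card ≤ k := by
      by_contra h
      push_neg at h
      obtain ⟨t, hts, htcard⟩ := Finset.exists_subset_card_eq (s := S) (show k + 1 ≤ S.card from h)
      have hli' := hli t (by omega)
      have hmem : ∀ i : t, x (i : Fin n) ∈ V := fun i =>
        (Finset.mem_filter.mp (hts i.2)).2
      have hv : LinearIndependent ℝ (fun i : t => (⟨x i, hmem i⟩ : V)) :=
        LinearIndependent.of_comp V.subtype hli'
      have hle := hv.fintype_card_le_finrank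
      rw [Fintype.card_coe, htcard] at hle
      omega
    rcases Finset.eq_empty_or_nonempty S with hSe | hSne
    · rw [hSe, Finset.sum_empty]
      positivity
    · have hm1 : 1 ≤ S.card := hSne.card_pos
      have hk1 : 1 ≤ k := le_trans hm1 hcard
      have hd2 : 2 ≤ d := by omega
      have hd1 : (1:ℝ) ≤ (d:ℝ) - 1 := by
        have : (2:ℝ) ≤ (d:ℝ) := by exact_mod_cast hd2
        linarith
      have hpos : (0:ℝ) < ((d:ℝ) - 1) * (ν + d) := by nlinarith
      have hB : ∀ i, w i < (ν + d - 1) / (((d:ℝ) - 1) * (ν + d)) := by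
        intro i
        rw [lt_div_iff₀ hpos]
        have h1 := hwmax i
        rw [lt_div_iff₀ hd0] at h1
        nlinarith [h1]
      have hsum : ∑ i ∈ S, w i
          < (S.card : ℝ) * ((ν + d - 1) / (((d:ℝ) - 1) * (ν + d))) := by
        calc ∑ i ∈ S, w i
            < ∑ _i ∈ S, ((ν + d - 1) / (((d:ℝ) - 1) * (ν + d))) :=
              Finset.sum_lt_sum_of_nonempty hSne (fun i _ => hB i)
          _ = _ := by rw [Finset.sum_const, nsmul_eq_mul]
      have hmk : (S.card : ℝ) ≤ (k : ℝ) := by exact_mod_cast hcard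
      have hkd : (k : ℝ) + 1 ≤ (d : ℝ) := by exact_mod_cast hV
      have final : (S.card : ℝ) * ((ν + d - 1) / (((d:ℝ) - 1) * (ν + d)))
          ≤ (ν + (k : ℝ)) / (ν + d) := by
        rw [mul_div_assoc', div_le_div_iff₀ hpos hd0]
        have hm0 : (0:ℝ) ≤ (S.card : ℝ) := Nat.cast_nonneg _
        have key : (S.card : ℝ) * (ν + d - 1) ≤ (ν + (k:ℝ)) * ((d:ℝ) - 1) := by
          nlinarith [mul_nonneg hν.le (by linarith : (0:ℝ) ≤ (d:ℝ) - 1 - (S.card:ℝ)),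
            mul_nonneg (by linarith : (0:ℝ) ≤ (k:ℝ) - (S.card:ℝ))
              (by linarith : (0:ℝ) ≤ (d:ℝ) - 1)]
        nlinarith [mul_le_mul_of_nonneg_right key hd0.le]
      linarith
  refine ⟨part1, ?_⟩
  by_contra h
  push_neg at h
  set V := Submodule.span ℝ (Set.range x) with hVdef
  have hfr : Module.finrank ℝ V ≤ n := by
    have := finrank_range_le_card (R := ℝ) x
    simpa [Set.finrank, Fintype.card_fin] using this
  have hVd : Module.finrank ℝ V < d := lt_of_le_of_lt hfr h
  have h1 := part1 V hVd
  have hall : ∀ i : Fin n, x i ∈ V := fun i => Submodule.subset_span ⟨i, rfl⟩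
  rw [Finset.filter_true_of_mem (fun i _ => hall i), hw1] at h1
  have hlt1 : (ν + (Module.finrank ℝ V : ℝ)) / (ν + d) < 1 := by
    rw [div_lt_one hd0]
    have : (Module.finrank ℝ V : ℝ) < (d : ℝ) := by exact_mod_cast hVd
    linarith
  linarith
end

section
/- If any subset of ≤ d samples is linearly independent and there exists a critical point Σ ∈ SPD(d) of L, then for every linear subspace V ⊂ ℝ^d with dim V ≤ d-1, the weight of samples in V satisfies ∑_{i: x_i ∈ V} w_i ≤ (ν + dim V)/(d + ν). -/
open Real Matrix Finset

open scoped Classical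

private lemma trace_mul_vecMulVec {d : ℕ} (M : Matrix (Fin d) (Fin d) ℝ) (u v : Fin d → ℝ) :
    Matrix.trace (M * Matrix.vecMulVec u v) = v ⬝ᵥ (M *ᵥ u) := by
  simp [Matrix.trace, Matrix.diag, Matrix.mul_apply, Matrix.vecMulVec_apply,
    Matrix.mulVec, dotProduct, Finset.mul_sum, mul_comm, mul_left_comm]

private lemma symm_mul_vecMulVec_mul_symm {d : ℕ} (A : Matrix (Fin d) (Fin d) ℝ)
    (hA : Aᵀ = A) (u : Fin d → ℝ) :
    A * Matrix.vecMulVec u u * A = Matrix.vecMulVec (A *ᵥ u) (A *ᵥ u) := by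
  rw [Matrix.vecMulVec_eq Unit, Matrix.vecMulVec_eq Unit, ← Matrix.mul_assoc,
    Matrix.mul_assoc (A * _), ← Matrix.replicateCol_mulVec, ← Matrix.replicateRow_vecMul]
  congr 1
  rw [← hA, Matrix.vecMul_transpose, hA]

private lemma real_dotProduct_self_pos {m : ℕ} {u : Fin m → ℝ} (hu : u ≠ 0) :
    0 < u ⬝ᵥ u := by
  have h0 : 0 ≤ u ⬝ᵥ u := Finset.sum_nonneg fun i _ => mul_self_nonneg _
  exact h0.lt_of_ne (fun h => hu (dotProduct_self_eq_zero.mp h.symm))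

/-- If any `≤ d` samples are linearly independent and `L` has a critical point
`Σ ∈ SPD(d)` (stationarity written with `S = Σ^{-1/2}`), then for every proper
linear subspace `V` the weight of samples in `V` is `≤ (ν + dim V)/(d + ν)`. -/
theorem weight_in_subspace_le_of_critical_point
    (d n : ℕ) (ν : ℝ) (hν : 0 < ν)
    (x : Fin n → Fin d → ℝ) (hx : ∀ i, x i ≠ 0)
    (w : Fin n → ℝ) (hw : ∀ i, 0 < w i) (hw1 : ∑ i, w i = 1)
    (hli : ∀ s : Finset (Fin n), s.card ≤ d →
      LinearIndependent ℝ (fun i : s => x i))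
    (Sig S : Matrix (Fin d) (Fin d) ℝ) (hSig : Sig.PosDef)
    (hS : S.PosDef) (hSsq : S * S = Sig⁻¹)
    (hstat : (1 : Matrix (Fin d) (Fin d) ℝ)
      = ((d : ℝ) + ν) • ∑ i, (w i / (ν + x i ⬝ᵥ Sig⁻¹ *ᵥ x i)) •
          (S * Matrix.vecMulVec (x i) (x i) * S)) :
    ∀ V : Submodule ℝ (Fin d → ℝ), Module.finrank ℝ V < d →
      ∑ i ∈ Finset.univ.filter (fun i => x i ∈ V), w i
        ≤ (ν + (Module.finrank ℝ V : ℝ)) / ((d : ℝ) + ν) := by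
  intro V hV
  have hdν : (0:ℝ) < (d:ℝ) + ν := by positivity
  set q : Fin n → ℝ := fun i => x i ⬝ᵥ Sig⁻¹ *ᵥ x i with hq_def
  set y : Fin n → Fin d → ℝ := fun i => S *ᵥ x i with hy_def
  set c : Fin n → ℝ := fun i => w i / (ν + q i) with hc_def
  have hSinv : Sig⁻¹.PosDef := hSig.inv
  have hq : ∀ i, 0 < q i := by
    intro i
    have := hSinv.dotProduct_mulVec_pos (hx i)
    simpa using this
  have hden : ∀ i, 0 < ν + q i := fun i => add_pos hν (hq i)
  have hc_pos : ∀ i, 0 < c i := fun i => div_pos (hw i) (hden i)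
  have hStr : Sᵀ = S := by
    have := hS.isHermitian
    simpa [Matrix.IsHermitian, Matrix.conjTranspose_eq_transpose_of_trivial] using this
  have hyq : ∀ i, y i ⬝ᵥ y i = q i := by
    intro i
    calc y i ⬝ᵥ y i = ((S *ᵥ x i) ᵥ* S) ⬝ᵥ x i := Matrix.dotProduct_mulVec _ S _
    _ = (Sᵀ *ᵥ (S *ᵥ x i)) ⬝ᵥ x i := by rw [Matrix.mulVec_transpose]
    _ = ((S * S) *ᵥ x i) ⬝ᵥ x i := by rw [hStr, Matrix.mulVec_mulVec]
    _ = q i := by rw [hSsq, dotProduct_comm]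
  have hstat' : (1 : Matrix (Fin d) (Fin d) ℝ)
      = ((d : ℝ) + ν) • ∑ i, c i • Matrix.vecMulVec (y i) (y i) := by
    rw [hstat]
    congr 1
    refine Finset.sum_congr rfl fun i _ => ?_
    rw [symm_mul_vecMulVec_mul_symm S hStr (x i)]
  have key : ∀ P : Matrix (Fin d) (Fin d) ℝ,
      Matrix.trace P = ((d:ℝ) + ν) * ∑ i, c i * (y i ⬝ᵥ P *ᵥ y i) := by
    intro P
    calc Matrix.trace P = Matrix.trace (P * 1) := by rw [Matrix.mul_one]
    _ = Matrix.trace (P * (((d : ℝ) + ν) • ∑ i, c i • Matrix.vecMulVec (y i) (y i))) := by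
        rw [← hstat']
    _ = ((d:ℝ) + ν) * ∑ i, c i * (y i ⬝ᵥ P *ᵥ y i) := by
        rw [Matrix.mul_smul, Matrix.trace_smul, Matrix.mul_sum, Matrix.trace_sum]
        simp only [Matrix.mul_smul, Matrix.trace_smul, trace_mul_vecMulVec, smul_eq_mul]
  have htot : ((d:ℝ) + ν) * ∑ i, c i * q i = d := by
    have h := key 1
    simp only [Matrix.trace_one, Matrix.one_mulVec, hyq] at h
    simp only [Fintype.card_fin] at h
    linarith [h]
  have hcq : ∀ i, c i * q i = w i - ν * c i := by
    intro i
    have h := (hden i).ne'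
    simp only [hc_def]
    field_simp
    ring
  have hsumc : ((d:ℝ) + ν) * (ν * ∑ i, c i) = ν := by
    have h1 : ∑ i, c i * q i = 1 - ν * ∑ i, c i := by
      simp only [hcq, Finset.sum_sub_distrib, hw1, Finset.mul_sum]
    rw [h1] at htot
    nlinarith [htot]
  -- construct the projection onto S·V
  set k := Module.finrank ℝ V with hk_def
  set b := Module.finBasis ℝ V with hb_def
  set v : Fin k → (Fin d → ℝ) := fun j => (b j : Fin d → ℝ) with hv_def
  have hv_li : LinearIndependent ℝ v :=
    b.linearIndependent.map' V.subtype (Submodule.ker_subtype V)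
  set B : Matrix (Fin d) (Fin k) ℝ := Matrix.of (fun r j => (S *ᵥ v j) r) with hB_def
  have hBmul : ∀ a : Fin k → ℝ, B *ᵥ a = S *ᵥ (∑ j, a j • v j) := by
    intro a
    funext r
    simp only [hB_def, Matrix.mulVec, dotProduct, Matrix.of_apply, Finset.sum_apply,
      Pi.smul_apply, smul_eq_mul, Finset.mul_sum, Finset.sum_mul]
    rw [Finset.sum_comm]
    exact Finset.sum_congr rfl fun j _ => Finset.sum_congr rfl fun r' _ => by ring
  have hBne : ∀ a : Fin k → ℝ, a ≠ 0 → B *ᵥ a ≠ 0 := by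
    intro a ha hBa
    rw [hBmul] at hBa
    have hu : (∑ j, a j • v j) ≠ 0 := by
      intro h0
      exact ha (funext fun j => Fintype.linearIndependent_iff.mp hv_li a h0 j)
    have hpos := hS.dotProduct_mulVec_pos hu
    rw [hBa] at hpos
    simp at hpos
  set G : Matrix (Fin k) (Fin k) ℝ := Bᵀ * B with hG_def
  have hGdot : ∀ a : Fin k → ℝ, a ⬝ᵥ G *ᵥ a = (B *ᵥ a) ⬝ᵥ (B *ᵥ a) := by
    intro a
    rw [hG_def, ← Matrix.mulVec_mulVec, Matrix.dotProduct_mulVec, Matrix.vecMul_transpose]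
  have hG : G.PosDef := by
    refine Matrix.PosDef.of_dotProduct_mulVec_pos ?_ ?_
    · show Gᴴ = G
      have h : Gᵀ = G := by rw [hG_def, Matrix.transpose_mul, Matrix.transpose_transpose]
      simpa [Matrix.conjTranspose_eq_transpose_of_trivial] using h
    · intro a ha
      have hsa : star a = a := by simp
      rw [hsa, hGdot]
      exact real_dotProduct_self_pos (hBne a ha)
  have hGdet : IsUnit G.det := isUnit_iff_ne_zero.mpr hG.det_pos.ne'
  have hGinv' : G⁻¹ * G = 1 := Matrix.nonsing_inv_mul _ hGdet
  set P : Matrix (Fin d) (Fin d) ℝ := B * G⁻¹ * Bᵀ with hP_def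
  have hPtr : Matrix.trace P = (k : ℝ) := by
    rw [hP_def, Matrix.trace_mul_comm, ← Matrix.mul_assoc, ← hG_def, ← Matrix.trace_mul_comm,
      hGinv', Matrix.trace_one]
    simp
  have hPdot : ∀ u : Fin d → ℝ, u ⬝ᵥ P *ᵥ u = (Bᵀ *ᵥ u) ⬝ᵥ G⁻¹ *ᵥ (Bᵀ *ᵥ u) := by
    intro u
    rw [hP_def, ← Matrix.mulVec_mulVec, ← Matrix.mulVec_mulVec, Matrix.dotProduct_mulVec u B,
      ← Matrix.mulVec_transpose]
  have hPpsd : ∀ u : Fin d → ℝ, 0 ≤ u ⬝ᵥ P *ᵥ u := by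
    intro u
    rw [hPdot]
    have h := hG.inv.posSemidef.dotProduct_mulVec_nonneg (Bᵀ *ᵥ u)
    simpa using h
  have hPB : P * B = B := by
    rw [hP_def, Matrix.mul_assoc (B * G⁻¹), ← hG_def, Matrix.mul_assoc, hGinv', Matrix.mul_one]
  have hPy : ∀ i, x i ∈ V → P *ᵥ y i = y i := by
    intro i hmem
    set a : Fin k → ℝ := fun j => b.repr ⟨x i, hmem⟩ j with ha_def
    have hxa : ∑ j, a j • v j = x i := by
      have h1 := b.sum_repr ⟨x i, hmem⟩
      have h2 := congrArg (Subtype.val : V → (Fin d → ℝ)) h1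
      simp only [Submodule.coe_sum, Submodule.coe_smul] at h2
      simpa [hv_def, ha_def] using h2
    have hya : y i = B *ᵥ a := by
      rw [hBmul, hxa]
    rw [hya, Matrix.mulVec_mulVec, hPB]
  -- the estimate
  set s := Finset.univ.filter (fun i => x i ∈ V) with hs_def
  have hkey := key P
  rw [hPtr] at hkey
  have hterm_nonneg : ∀ i, 0 ≤ c i * (y i ⬝ᵥ P *ᵥ y i) :=
    fun i => mul_nonneg (hc_pos i).le (hPpsd (y i))
  have hsub : ∑ i ∈ s, c i * (y i ⬝ᵥ P *ᵥ y i) ≤ ∑ i, c i * (y i ⬝ᵥ P *ᵥ y i) :=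
    Finset.sum_le_sum_of_subset_of_nonneg (Finset.subset_univ s) (fun i _ _ => hterm_nonneg i)
  have hs_eq : ∑ i ∈ s, c i * (y i ⬝ᵥ P *ᵥ y i) = ∑ i ∈ s, c i * q i := by
    refine Finset.sum_congr rfl fun i hi => ?_
    have hmem : x i ∈ V := (Finset.mem_filter.mp hi).2
    rw [hPy i hmem, hyq]
  have hmain : ((d:ℝ) + ν) * ∑ i ∈ s, c i * q i ≤ (k : ℝ) := by
    rw [hs_eq] at hsub
    nlinarith [hsub, hkey]
  have hcsub : ∑ i ∈ s, c i ≤ ∑ i, c i :=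
    Finset.sum_le_sum_of_subset_of_nonneg (Finset.subset_univ s) (fun i _ _ => (hc_pos i).le)
  have hs_w : ∑ i ∈ s, c i * q i = (∑ i ∈ s, w i) - ν * ∑ i ∈ s, c i := by
    simp only [hcq, Finset.sum_sub_distrib, Finset.mul_sum]
  rw [hs_w] at hmain
  rw [le_div_iff₀ hdν]
  nlinarith [mul_le_mul_of_nonneg_left hcsub (by positivity : (0:ℝ) ≤ ((d:ℝ)+ν) * ν), hsumc]
end

section
/- For ν > 0 and μ = 0, if the samples and weights satisfy Assumption A, then the function L(Σ) = (d+ν)∑ w_i log(ν + x_i^T Σ^{-1} x_i) + log|Σ| has at most one critical point in SPD(d): if Σ₁, Σ₂ ∈ SPD(d) both satisfy the fixed-point equation Σ = (d+ν)∑_i w_i x_i x_i^T/(ν + x_i^T Σ^{-1} x_i), then Σ₁ = Σ₂. -/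
open Real Matrix Finset

section AuxUnique
variable {d n : ℕ}

lemma my_sum_mulVec (f : Fin n → Matrix (Fin d) (Fin d) ℝ) (v : Fin d → ℝ) :
    (∑ i, f i) *ᵥ v = ∑ i, f i *ᵥ v := by
  ext j
  simp only [Matrix.mulVec, dotProduct, Matrix.sum_apply, Finset.sum_apply,
    Finset.sum_mul]
  rw [Finset.sum_comm]

lemma my_vecMulVec_quad (a v : Fin d → ℝ) :
    v ⬝ᵥ (Matrix.vecMulVec a a) *ᵥ v = (a ⬝ᵥ v) ^ 2 := by
  simp only [dotProduct, Matrix.mulVec, Matrix.vecMulVec_apply, sq,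
    Finset.sum_mul, Finset.mul_sum]
  rw [Finset.sum_comm]
  exact Finset.sum_congr rfl fun i _ => Finset.sum_congr rfl fun j _ => by ring

lemma my_dot_sum (v : Fin d → ℝ) (f : Fin n → Fin d → ℝ) :
    v ⬝ᵥ (∑ i, f i) = ∑ i, v ⬝ᵥ f i := by
  simp only [dotProduct, Finset.sum_apply, Finset.mul_sum]
  rw [Finset.sum_comm]

lemma my_quad_fix (c : ℝ) (x : Fin n → Fin d → ℝ) (cf : Fin n → ℝ)
    (Sig : Matrix (Fin d) (Fin d) ℝ)
    (h : Sig = c • ∑ i, cf i • Matrix.vecMulVec (x i) (x i)) (v : Fin d → ℝ) :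
    v ⬝ᵥ Sig *ᵥ v = c * ∑ i, cf i * (x i ⬝ᵥ v) ^ 2 := by
  subst h
  rw [Matrix.smul_mulVec, dotProduct_smul, my_sum_mulVec]
  simp only [smul_eq_mul]
  congr 1
  rw [my_dot_sum]
  refine Finset.sum_congr rfl fun i _ => ?_
  rw [Matrix.smul_mulVec, dotProduct_smul, smul_eq_mul, my_vecMulVec_quad]

lemma my_symm_dot {A : Matrix (Fin d) (Fin d) ℝ} (hA : A.IsHermitian) (a b : Fin d → ℝ) :
    a ⬝ᵥ A *ᵥ b = b ⬝ᵥ A *ᵥ a := by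
  simp only [dotProduct, Matrix.mulVec, Finset.mul_sum]
  rw [Finset.sum_comm]
  refine Finset.sum_congr rfl fun i _ => Finset.sum_congr rfl fun j _ => ?_
  have h : A j i = A i j := by
    have := congrFun (congrFun hA i) j
    simpa using this
  rw [h]; ring

lemma my_inv_quad_le {A B : Matrix (Fin d) (Fin d) ℝ} (hA : A.PosDef) (hB : B.PosDef)
    (h : ∀ v, v ⬝ᵥ A *ᵥ v ≤ v ⬝ᵥ B *ᵥ v) (v : Fin d → ℝ) :
    v ⬝ᵥ B⁻¹ *ᵥ v ≤ v ⬝ᵥ A⁻¹ *ᵥ v := by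
  have hBd : IsUnit B.det := hB.det_pos.ne'.isUnit
  have hAd : IsUnit A.det := hA.det_pos.ne'.isUnit
  set u := B⁻¹ *ᵥ v with hu
  set wv := A⁻¹ *ᵥ v with hwv
  have hBu : B *ᵥ u = v := by
    rw [hu, Matrix.mulVec_mulVec, Matrix.mul_nonsing_inv B hBd, Matrix.one_mulVec]
  have hAv : A *ᵥ wv = v := by
    rw [hwv, Matrix.mulVec_mulVec, Matrix.mul_nonsing_inv A hAd, Matrix.one_mulVec]
  have h1 : v ⬝ᵥ B⁻¹ *ᵥ v = u ⬝ᵥ v := dotProduct_comm _ _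
  have h2 : u ⬝ᵥ B *ᵥ u = u ⬝ᵥ v := by rw [hBu]
  have hzz : 0 ≤ (u - wv) ⬝ᵥ A *ᵥ (u - wv) := by
    simpa using hA.posSemidef.dotProduct_mulVec_nonneg (u - wv)
  have hexp : (u - wv) ⬝ᵥ A *ᵥ (u - wv)
      = u ⬝ᵥ A *ᵥ u - 2 * (u ⬝ᵥ v) + v ⬝ᵥ A⁻¹ *ᵥ v := by
    rw [Matrix.mulVec_sub, sub_dotProduct, dotProduct_sub,
      dotProduct_sub, hAv]
    have e1 : wv ⬝ᵥ A *ᵥ u = u ⬝ᵥ v := by rw [my_symm_dot hA.1, hAv]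
    have e2 : wv ⬝ᵥ v = v ⬝ᵥ A⁻¹ *ᵥ v := dotProduct_comm _ _
    rw [e1, e2]; ring
  have hAu := h u
  rw [h1]
  linarith

lemma my_quad_ext {A B : Matrix (Fin d) (Fin d) ℝ} (hA : A.IsHermitian) (hB : B.IsHermitian)
    (h : ∀ v, v ⬝ᵥ A *ᵥ v = v ⬝ᵥ B *ᵥ v) : A = B := by
  have key : ∀ (M : Matrix (Fin d) (Fin d) ℝ) (i j : Fin d),
      (Pi.single i 1 : Fin d → ℝ) ⬝ᵥ M *ᵥ (Pi.single j 1) = M i j := by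
    intro M i j
    rw [Matrix.mulVec_single, single_dotProduct]
    simp
  ext i j
  have hAs : A j i = A i j := by
    have := congrFun (congrFun hA i) j; simpa using this
  have hBs : B j i = B i j := by
    have := congrFun (congrFun hB i) j; simpa using this
  have h1 := h (Pi.single i 1 + Pi.single j 1)
  have h2 := h (Pi.single i 1)
  have h3 := h (Pi.single j 1)
  simp only [Matrix.mulVec_add, add_dotProduct, dotProduct_add] at h1
  simp only [key] at h1 h2 h3
  rw [hAs, hBs] at h1
  linarith

lemma my_posdef_smul {A : Matrix (Fin d) (Fin d) ℝ} (hA : A.PosDef) {t : ℝ} (ht : 0 < t) :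
    (t • A).PosDef := by
  refine Matrix.PosDef.of_dotProduct_mulVec_pos ?_ ?_
  · unfold Matrix.IsHermitian
    rw [Matrix.conjTranspose_smul, hA.1]
    simp
  · intro v hv
    have h1 := hA.dotProduct_mulVec_pos hv
    have : (star v) ⬝ᵥ (t • A) *ᵥ v = t * ((star v) ⬝ᵥ A *ᵥ v) := by
      rw [Matrix.smul_mulVec, dotProduct_smul, smul_eq_mul]
    rw [this]
    positivity

lemma my_quad_smul (t : ℝ) (M : Matrix (Fin d) (Fin d) ℝ) (v : Fin d → ℝ) :
    v ⬝ᵥ (t • M) *ᵥ v = t * (v ⬝ᵥ M *ᵥ v) := by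
  rw [Matrix.smul_mulVec, dotProduct_smul, smul_eq_mul]

lemma my_quad_smul_vec (t : ℝ) (M : Matrix (Fin d) (Fin d) ℝ) (v : Fin d → ℝ) :
    (t • v) ⬝ᵥ M *ᵥ (t • v) = t ^ 2 * (v ⬝ᵥ M *ᵥ v) := by
  rw [Matrix.mulVec_smul, smul_dotProduct, dotProduct_smul]
  simp [smul_eq_mul]; ring

lemma my_quad_continuous (M : Matrix (Fin d) (Fin d) ℝ) :
    Continuous fun v : Fin d → ℝ => v ⬝ᵥ M *ᵥ v := by
  unfold dotProduct Matrix.mulVec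
  exact continuous_finset_sum _ fun i _ => (continuous_apply i).mul
    (continuous_finset_sum _ fun j _ => continuous_const.mul (continuous_apply j))

lemma my_one_sided (d n : ℕ) (hd : 0 < d) (ν : ℝ) (hν : 0 < ν)
    (x : Fin n → Fin d → ℝ) (w : Fin n → ℝ) (hw : ∀ i, 0 < w i)
    (Sig1 Sig2 : Matrix (Fin d) (Fin d) ℝ) (hSig1 : Sig1.PosDef) (hSig2 : Sig2.PosDef)
    (hfix1 : Sig1 = ((d : ℝ) + ν) • ∑ i, (w i / (ν + x i ⬝ᵥ Sig1⁻¹ *ᵥ x i)) •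
      Matrix.vecMulVec (x i) (x i))
    (hfix2 : Sig2 = ((d : ℝ) + ν) • ∑ i, (w i / (ν + x i ⬝ᵥ Sig2⁻¹ *ᵥ x i)) •
      Matrix.vecMulVec (x i) (x i))
    (v : Fin d → ℝ) : v ⬝ᵥ Sig2 *ᵥ v ≤ v ⬝ᵥ Sig1 *ᵥ v := by
  have hq1nn : ∀ i, 0 ≤ x i ⬝ᵥ Sig1⁻¹ *ᵥ x i := fun i => by
    simpa using hSig1.inv.posSemidef.dotProduct_mulVec_nonneg (x i)
  have hq2nn : ∀ i, 0 ≤ x i ⬝ᵥ Sig2⁻¹ *ᵥ x i := fun i => by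
    simpa using hSig2.inv.posSemidef.dotProduct_mulVec_nonneg (x i)
  have hd1 : ∀ i, 0 < ν + x i ⬝ᵥ Sig1⁻¹ *ᵥ x i := fun i => by linarith [hq1nn i]
  have hd2 : ∀ i, 0 < ν + x i ⬝ᵥ Sig2⁻¹ *ᵥ x i := fun i => by linarith [hq2nn i]
  have hc : (0:ℝ) < (d:ℝ) + ν := by positivity
  have hQ1 : ∀ u : Fin d → ℝ, u ⬝ᵥ Sig1 *ᵥ u
      = ((d:ℝ)+ν) * ∑ i, (w i / (ν + x i ⬝ᵥ Sig1⁻¹ *ᵥ x i)) * (x i ⬝ᵥ u)^2 :=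
    fun u => my_quad_fix _ _ _ _ hfix1 u
  have hQ2 : ∀ u : Fin d → ℝ, u ⬝ᵥ Sig2 *ᵥ u
      = ((d:ℝ)+ν) * ∑ i, (w i / (ν + x i ⬝ᵥ Sig2⁻¹ *ᵥ x i)) * (x i ⬝ᵥ u)^2 :=
    fun u => my_quad_fix _ _ _ _ hfix2 u
  have hpos1 : ∀ u : Fin d → ℝ, u ≠ 0 → 0 < u ⬝ᵥ Sig1 *ᵥ u := fun u hu => by
    simpa using hSig1.dotProduct_mulVec_pos hu
  have hpos2 : ∀ u : Fin d → ℝ, u ≠ 0 → 0 < u ⬝ᵥ Sig2 *ᵥ u := fun u hu => by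
    simpa using hSig2.dotProduct_mulVec_pos hu
  have hnn2 : ∀ u : Fin d → ℝ, 0 ≤ u ⬝ᵥ Sig2 *ᵥ u := fun u => by
    simpa using hSig2.posSemidef.dotProduct_mulVec_nonneg u
  haveI : Nonempty (Fin d) := ⟨⟨0, hd⟩⟩
  have hne : (Metric.sphere (0 : Fin d → ℝ) 1).Nonempty :=
    NormedSpace.sphere_nonempty.mpr zero_le_one
  have hvne : ∀ u ∈ Metric.sphere (0 : Fin d → ℝ) 1, u ≠ 0 := by
    intro u hu h0
    rw [mem_sphere_zero_iff_norm] at hu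
    rw [h0] at hu; simp at hu
  set f : (Fin d → ℝ) → ℝ := fun u => (u ⬝ᵥ Sig1 *ᵥ u) / (u ⬝ᵥ Sig2 *ᵥ u) with hf
  have hcont : ContinuousOn f (Metric.sphere (0 : Fin d → ℝ) 1) :=
    ((my_quad_continuous Sig1).continuousOn).div ((my_quad_continuous Sig2).continuousOn)
      (fun u hu => (hpos2 u (hvne u hu)).ne')
  obtain ⟨v0, hv0S, hmin⟩ := (isCompact_sphere (0 : Fin d → ℝ) 1).exists_isMinOn hne hcont
  have hv0ne : v0 ≠ 0 := hvne v0 hv0S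
  set t := f v0 with htdef
  have ht : 0 < t := div_pos (hpos1 v0 hv0ne) (hpos2 v0 hv0ne)
  have hmin' : ∀ u : Fin d → ℝ, u ≠ 0 → t ≤ f u := by
    intro u hu
    have hn : ‖u‖ ≠ 0 := norm_ne_zero_iff.mpr hu
    have hmem : (‖u‖⁻¹ • u) ∈ Metric.sphere (0 : Fin d → ℝ) 1 := by
      rw [mem_sphere_zero_iff_norm, norm_smul, norm_inv, norm_norm,
        inv_mul_cancel₀ hn]
    have hle : f v0 ≤ f (‖u‖⁻¹ • u) := hmin hmem
    have heq : f (‖u‖⁻¹ • u) = f u := by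
      simp only [hf, my_quad_smul_vec]
      rw [mul_div_mul_left _ _ (pow_ne_zero 2 (inv_ne_zero hn))]
    rw [heq] at hle
    exact hle
  have hlow : ∀ u : Fin d → ℝ, t * (u ⬝ᵥ Sig2 *ᵥ u) ≤ u ⬝ᵥ Sig1 *ᵥ u := by
    intro u
    by_cases hu : u = 0
    · subst hu; simp
    · have h := hmin' u hu
      rw [hf] at h
      exact (le_div_iff₀ (hpos2 u hu)).mp h
  have ht1 : 1 ≤ t := by
    by_contra hlt
    push_neg at hlt
    have htA : (t • Sig2).PosDef := my_posdef_smul hSig2 ht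
    have hmono : ∀ u : Fin d → ℝ, u ⬝ᵥ (t • Sig2) *ᵥ u ≤ u ⬝ᵥ Sig1 *ᵥ u := by
      intro u; rw [my_quad_smul]; exact hlow u
    have hinv := my_inv_quad_le htA hSig1 hmono
    have hsinv : (t • Sig2)⁻¹ = t⁻¹ • Sig2⁻¹ := by
      apply Matrix.inv_eq_right_inv
      rw [Matrix.smul_mul, Matrix.mul_smul, smul_smul, mul_inv_cancel₀ ht.ne', one_smul,
        Matrix.mul_nonsing_inv _ hSig2.det_pos.ne'.isUnit]
    have hq : ∀ i, x i ⬝ᵥ Sig1⁻¹ *ᵥ x i ≤ t⁻¹ * (x i ⬝ᵥ Sig2⁻¹ *ᵥ x i) := by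
      intro i
      have h := hinv (x i)
      rwa [hsinv, my_quad_smul] at h
    have htinv : 1 < t⁻¹ := (one_lt_inv₀ ht).mpr hlt
    have hcoef : ∀ i, t * (w i / (ν + x i ⬝ᵥ Sig2⁻¹ *ᵥ x i))
        < w i / (ν + x i ⬝ᵥ Sig1⁻¹ *ᵥ x i) := by
      intro i
      have h3 : ν + x i ⬝ᵥ Sig1⁻¹ *ᵥ x i < t⁻¹ * (ν + x i ⬝ᵥ Sig2⁻¹ *ᵥ x i) := by
        have hνlt : ν < t⁻¹ * ν := by nlinarith
        have := hq i
        nlinarith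
      have h4 : t * (ν + x i ⬝ᵥ Sig1⁻¹ *ᵥ x i) < ν + x i ⬝ᵥ Sig2⁻¹ *ᵥ x i := by
        have h5 := mul_lt_mul_of_pos_left h3 ht
        rwa [← mul_assoc, mul_inv_cancel₀ ht.ne', one_mul] at h5
      rw [← mul_div_assoc, div_lt_div_iff₀ (hd2 i) (hd1 i)]
      nlinarith [mul_lt_mul_of_pos_left h4 (hw i)]
    have heqv0 : v0 ⬝ᵥ Sig1 *ᵥ v0 = t * (v0 ⬝ᵥ Sig2 *ᵥ v0) := by
      rw [htdef]
      simp only [hf]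
      rw [div_mul_cancel₀ _ (hpos2 v0 hv0ne).ne']
    have hS : ∑ i, (w i / (ν + x i ⬝ᵥ Sig1⁻¹ *ᵥ x i)) * (x i ⬝ᵥ v0)^2
        = t * ∑ i, (w i / (ν + x i ⬝ᵥ Sig2⁻¹ *ᵥ x i)) * (x i ⬝ᵥ v0)^2 := by
      have h := heqv0
      rw [hQ1 v0, hQ2 v0] at h
      apply mul_left_cancel₀ hc.ne'
      rw [h]; ring
    have hsum : ∑ i, (w i / (ν + x i ⬝ᵥ Sig1⁻¹ *ᵥ x i)
        - t * (w i / (ν + x i ⬝ᵥ Sig2⁻¹ *ᵥ x i))) * (x i ⬝ᵥ v0)^2 = 0 := by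
      have : ∀ i : Fin n, (w i / (ν + x i ⬝ᵥ Sig1⁻¹ *ᵥ x i)
          - t * (w i / (ν + x i ⬝ᵥ Sig2⁻¹ *ᵥ x i))) * (x i ⬝ᵥ v0)^2
          = (w i / (ν + x i ⬝ᵥ Sig1⁻¹ *ᵥ x i)) * (x i ⬝ᵥ v0)^2
          - t * ((w i / (ν + x i ⬝ᵥ Sig2⁻¹ *ᵥ x i)) * (x i ⬝ᵥ v0)^2) := fun i => by ring
      rw [Finset.sum_congr rfl (fun i _ => this i), Finset.sum_sub_distrib,
        ← Finset.mul_sum, hS, sub_self]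
    have hall := (Finset.sum_eq_zero_iff_of_nonneg (fun i _ =>
      mul_nonneg (sub_pos.mpr (hcoef i)).le (sq_nonneg (x i ⬝ᵥ v0)))).mp hsum
    have hzero : v0 ⬝ᵥ Sig1 *ᵥ v0 = 0 := by
      rw [hQ1 v0]
      have : ∀ i ∈ Finset.univ, (w i / (ν + x i ⬝ᵥ Sig1⁻¹ *ᵥ x i)) * (x i ⬝ᵥ v0)^2 = 0 := by
        intro i hi
        have h0 := hall i hi
        have hs0 : (x i ⬝ᵥ v0)^2 = 0 := by
          rcases mul_eq_zero.mp h0 with h | h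
          · exact absurd h (sub_pos.mpr (hcoef i)).ne'
          · exact h
        rw [hs0, mul_zero]
      rw [Finset.sum_eq_zero this, mul_zero]
    exact absurd hzero (hpos1 v0 hv0ne).ne'
  have h := hlow v
  nlinarith [hnn2 v]

end AuxUnique

/-- Uniqueness of the scatter critical point for `ν > 0`, `μ = 0`: under
Assumption A, if `Σ₁, Σ₂ ∈ SPD(d)` both satisfy the fixed-point equation
`Σ = (d+ν) ∑ᵢ wᵢ xᵢxᵢᵀ/(ν + xᵢᵀΣ⁻¹xᵢ)`, then `Σ₁ = Σ₂`. -/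
theorem studentT_scatter_unique_critical_point
    (d n : ℕ) (ν : ℝ) (hν : 0 < ν)
    (x : Fin n → Fin d → ℝ)
    (w : Fin n → ℝ) (hw : ∀ i, 0 < w i) (hw1 : ∑ i, w i = 1)
    (hli : ∀ s : Finset (Fin n), s.card ≤ d →
      LinearIndependent ℝ (fun i : s => x i))
    (hwmax : ∀ i, ((d : ℝ) - 1) * w i < (ν + d - 1) / (ν + d))
    (Sig1 Sig2 : Matrix (Fin d) (Fin d) ℝ) (hSig1 : Sig1.PosDef) (hSig2 : Sig2.PosDef)
    (hfix1 : Sig1 = ((d : ℝ) + ν) • ∑ i, (w i / (ν + x i ⬝ᵥ Sig1⁻¹ *ᵥ x i)) •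
      Matrix.vecMulVec (x i) (x i))
    (hfix2 : Sig2 = ((d : ℝ) + ν) • ∑ i, (w i / (ν + x i ⬝ᵥ Sig2⁻¹ *ᵥ x i)) •
      Matrix.vecMulVec (x i) (x i)) :
    Sig1 = Sig2 := by
  rcases Nat.eq_zero_or_pos d with hd0 | hd
  · subst hd0
    ext i j
    exact i.elim0
  · have h12 := my_one_sided d n hd ν hν x w hw Sig1 Sig2 hSig1 hSig2 hfix1 hfix2
    have h21 := my_one_sided d n hd ν hν x w hw Sig2 Sig1 hSig2 hSig1 hfix2 hfix1
    exact my_quad_ext hSig1.1 hSig2.1 (fun v => le_antisymm (h21 v) (h12 v))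
end

section
/- Fix ν > 0 and d ≥ 1. On SPD(d), the function g(X) = ((d+ν)/ν - tr(X)/ν)^ν · det(X), defined on {X ∈ SPD(d) : 0 < tr(X) < d+ν}, attains its maximum value 1 uniquely at X = I; in particular g(X) ≤ 1 for all SPD matrices X with tr(X) < d+ν. -/
open Real Matrix

/-- On `{X ∈ SPD(d) : tr X < d + ν}` the function
`g(X) = ((d+ν)/ν - tr(X)/ν)^ν det X` satisfies `g(X) ≤ 1`, with
equality exactly at `X = I` (where the maximum value `1` is attained). -/
theorem spd_trace_det_function_max
    (d : ℕ) (hd : 1 ≤ d) (ν : ℝ) (hν : 0 < ν) :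
    ∀ X : Matrix (Fin d) (Fin d) ℝ, X.PosDef → X.trace < (d : ℝ) + ν →
      (((d : ℝ) + ν) / ν - X.trace / ν) ^ ν * X.det ≤ 1 ∧
      ((((d : ℝ) + ν) / ν - X.trace / ν) ^ ν * X.det = 1 ↔ X = 1) := by
  intro X hX htr
  have hH := hX.1
  have hdet : X.det = ∏ i, hH.eigenvalues i := by
    simpa using hH.det_eq_prod_eigenvalues
  have htrace : X.trace = ∑ i, hH.eigenvalues i := by
    conv_lhs => rw [hH.spectral_theorem]
    rw [Unitary.conjStarAlgAut_apply, Matrix.trace_mul_cycle,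
      (Matrix.mem_unitaryGroup_iff').mp (hH.eigenvectorUnitary).2, Matrix.one_mul,
      Matrix.trace_diagonal]
    simp
  set μ := hH.eigenvalues with hμ
  have hpos : ∀ i, 0 < μ i := fun i => hX.eigenvalues_pos i
  set t : ℝ := ((d : ℝ) + ν) / ν - X.trace / ν with ht
  have htpos : 0 < t := by
    rw [ht, div_sub_div_same]
    apply div_pos (by linarith) hν
  have hsum : ν * t + ∑ i, μ i = (d : ℝ) + ν := by
    rw [ht, ← htrace]
    field_simp; ring
  have hdpos : 0 < X.det := hX.det_pos
  have h1 : t ^ ν ≤ Real.exp (ν * (t - 1)) := by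
    rw [Real.rpow_def_of_pos htpos, Real.exp_le_exp]
    have := Real.log_le_sub_one_of_pos htpos
    nlinarith
  have h2 : X.det ≤ Real.exp (∑ i, (μ i - 1)) := by
    rw [hdet, Real.exp_sum]
    exact Finset.prod_le_prod (fun i _ => (hpos i).le)
      (fun i _ => by have := Real.add_one_le_exp (μ i - 1); linarith)
  have hsum1 : ∑ i, (μ i - 1) = (∑ i, μ i) - d := by
    rw [Finset.sum_sub_distrib]; simp
  have hexp : Real.exp (ν * (t - 1)) * Real.exp (∑ i, (μ i - 1)) = 1 := by
    rw [← Real.exp_add, hsum1]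
    have h0 : ν * (t - 1) + (∑ i, μ i - (d : ℝ)) = 0 := by nlinarith [hsum]
    rw [h0, Real.exp_zero]
  have htν : 0 < t ^ ν := Real.rpow_pos_of_pos htpos ν
  have hle : t ^ ν * X.det ≤ 1 := by
    calc t ^ ν * X.det ≤ Real.exp (ν * (t - 1)) * Real.exp (∑ i, (μ i - 1)) :=
          mul_le_mul h1 h2 hdpos.le (Real.exp_pos _).le
      _ = 1 := hexp
  refine ⟨hle, ?_, ?_⟩
  · -- equality → X = 1
    intro heq
    have ht1 : t = 1 := by
      by_contra ht1
      have hstrict : t ^ ν < Real.exp (ν * (t - 1)) := by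
        rw [Real.rpow_def_of_pos htpos, Real.exp_lt_exp]
        have := Real.log_lt_sub_one_of_pos htpos ht1
        nlinarith
      have hlt : t ^ ν * X.det < 1 := by
        calc t ^ ν * X.det < Real.exp (ν * (t - 1)) * X.det :=
              mul_lt_mul_of_pos_right hstrict hdpos
          _ ≤ Real.exp (ν * (t - 1)) * Real.exp (∑ i, (μ i - 1)) :=
              mul_le_mul_of_nonneg_left h2 (Real.exp_pos _).le
          _ = 1 := hexp
      linarith
    have hdet1 : X.det = 1 := by
      rw [ht1, Real.one_rpow, one_mul] at heq
      exact heq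
    have hsumd : ∑ i, μ i = (d : ℝ) := by
      rw [ht1] at hsum; linarith
    have hall : ∀ i, μ i = 1 := by
      by_contra hne
      obtain ⟨j, hj⟩ := not_forall.mp hne
      have hstrict : ∏ i, μ i < ∏ i, Real.exp (μ i - 1) := by
        apply Finset.prod_lt_prod (fun i _ => hpos i)
          (fun i _ => by have := Real.add_one_le_exp (μ i - 1); linarith)
        exact ⟨j, Finset.mem_univ j, by
          have := Real.add_one_lt_exp (x := μ j - 1) (by intro h; apply hj; linarith); linarith⟩
      rw [← Real.exp_sum, hsum1, hsumd, sub_self, Real.exp_zero, ← hdet, hdet1] at hstrict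
      linarith
    rw [hH.spectral_theorem]
    have he : hH.eigenvalues = fun _ => 1 := funext hall
    rw [he]
    have hdiag : Matrix.diagonal (RCLike.ofReal ∘ fun (_ : Fin d) => (1 : ℝ))
        = (1 : Matrix (Fin d) (Fin d) ℝ) := by simp [Function.comp]
    rw [hdiag, map_one]
  · -- X = 1 → equality
    intro hX1
    subst hX1
    have h1t : Matrix.trace (1 : Matrix (Fin d) (Fin d) ℝ) = (d : ℝ) := by
      simp [Matrix.trace_one]
    have : t = 1 := by rw [ht, h1t, div_sub_div_same]; field_simp; ring
    rw [this, Real.one_rpow, Matrix.det_one, mul_one]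
end

section
/- (Monotone descent of the GMMF location update) Fix Σ ∈ SPD(d) and ν > 0. Given μ, define μ' = [∑_i w_i x_i/(ν+δ_i)] / [∑_i w_i/(ν+δ_i)] where δ_i = (x_i-μ)^T Σ^{-1}(x_i-μ). Then L(μ',Σ) - L(μ,Σ) ≤ (d+ν) log(1 - ‖S₁‖²/((d+ν)S₀)) ≤ 0, where S₀ = (d+ν)∑w_i/(ν+δ_i) and S₁ = (d+ν)∑w_i R^{-1}(x_i-μ)/(ν+δ_i) with Σ = RR^T; equality holds iff μ' = μ. -/
open Real Matrix Finset

/-- Monotone descent of the GMMF location update: with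
`μ' = (∑ᵢ wᵢ xᵢ/(ν+δᵢ)) / (∑ᵢ wᵢ/(ν+δᵢ))`, `S₀ = (d+ν)∑ᵢ wᵢ/(ν+δᵢ)`,
`S₁ = (d+ν)∑ᵢ wᵢ R⁻¹(xᵢ-μ)/(ν+δᵢ)` (`Σ = RRᵀ` a Cholesky factorization),
one has `L(μ',Σ) - L(μ,Σ) ≤ (d+ν) log(1 - ‖S₁‖²/((d+ν)S₀)) ≤ 0`,
with equality iff `μ' = μ`. -/
theorem gmmf_location_update_descent
    (d n : ℕ) (ν : ℝ) (hν : 0 < ν)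
    (x : Fin n → Fin d → ℝ)
    (w : Fin n → ℝ) (hw : ∀ i, 0 < w i) (hw1 : ∑ i, w i = 1)
    (Sig R : Matrix (Fin d) (Fin d) ℝ) (hSig : Sig.PosDef)
    (hR : Sig = R * Rᵀ) (hRdet : IsUnit R.det)
    (μ μ' : Fin d → ℝ)
    (δ : Fin n → ℝ) (hδ : ∀ i, δ i = (x i - μ) ⬝ᵥ Sig⁻¹ *ᵥ (x i - μ))
    (hupd : μ' = (∑ i, w i / (ν + δ i))⁻¹ • ∑ i, (w i / (ν + δ i)) • x i)
    (L : (Fin d → ℝ) → Matrix (Fin d) (Fin d) ℝ → ℝ)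
    (hL : ∀ (m : Fin d → ℝ) (M : Matrix (Fin d) (Fin d) ℝ),
      L m M = ((d : ℝ) + ν) * (∑ i, w i * Real.log (ν + (x i - m) ⬝ᵥ M⁻¹ *ᵥ (x i - m)))
        + Real.log M.det)
    (S0 : ℝ) (hS0 : S0 = ((d : ℝ) + ν) * ∑ i, w i / (ν + δ i))
    (S1 : Fin d → ℝ)
    (hS1 : S1 = ((d : ℝ) + ν) • ∑ i, (w i / (ν + δ i)) • (R⁻¹ *ᵥ (x i - μ))) :
    L μ' Sig - L μ Sig ≤ ((d : ℝ) + ν) * Real.log (1 - (S1 ⬝ᵥ S1) / (((d : ℝ) + ν) * S0)) ∧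
    ((d : ℝ) + ν) * Real.log (1 - (S1 ⬝ᵥ S1) / (((d : ℝ) + ν) * S0)) ≤ 0 ∧
    (L μ' Sig = L μ Sig ↔ μ' = μ) := by
  have hd : (0:ℝ) < (d:ℝ) + ν := by positivity
  have hne : Nonempty (Fin n) := by
    by_contra h
    rw [not_nonempty_iff] at h
    simp [Finset.univ_eq_empty] at hw1
  have hnem : (Finset.univ : Finset (Fin n)).Nonempty := Finset.univ_nonempty
  set Q := R⁻¹ with hQdef
  have hQdet : IsUnit Q.det := R.isUnit_nonsing_inv_det hRdet
  have hSiginv : Sig⁻¹ = Qᵀ * Q := by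
    rw [hR, Matrix.mul_inv_rev, ← Matrix.transpose_nonsing_inv]
  have hself : ∀ v : Fin d → ℝ, 0 ≤ v ⬝ᵥ v := fun v =>
    Finset.sum_nonneg fun j _ => mul_self_nonneg _
  have quad : ∀ v : Fin d → ℝ, v ⬝ᵥ Sig⁻¹ *ᵥ v = (Q *ᵥ v) ⬝ᵥ (Q *ᵥ v) := by
    intro v
    rw [hSiginv, ← Matrix.mulVec_mulVec, Matrix.dotProduct_mulVec, Matrix.vecMul_transpose]
  set z : Fin n → Fin d → ℝ := fun i => Q *ᵥ (x i - μ) with hzdef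
  have hδz : ∀ i, δ i = z i ⬝ᵥ z i := fun i => (hδ i).trans (quad _)
  have hδpos : ∀ i, 0 < ν + δ i := fun i =>
    add_pos_of_pos_of_nonneg hν ((hδz i) ▸ hself (z i))
  set a : Fin n → ℝ := fun i => w i / (ν + δ i) with hadef
  have ha : ∀ i, 0 < a i := fun i => div_pos (hw i) (hδpos i)
  set A : ℝ := ∑ i, a i with hAdef
  have hA : 0 < A := Finset.sum_pos (fun i _ => ha i) hnem
  set u : Fin d → ℝ := ∑ i, a i • z i with hudef
  set c : Fin d → ℝ := A⁻¹ • u with hcdef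
  -- μ' - μ in terms of u
  have hdiff : μ' - μ = A⁻¹ • ∑ i, a i • (x i - μ) := by
    have h1 : ∑ i, a i • (x i - μ) = (∑ i, a i • x i) - A • μ := by
      simp only [smul_sub, Finset.sum_sub_distrib, hAdef, Finset.sum_smul]
    rw [h1, smul_sub, smul_smul, inv_mul_cancel₀ hA.ne', one_smul, hupd]
  have hc : Q *ᵥ (μ' - μ) = c := by
    rw [hdiff, Matrix.mulVec_smul, hcdef, hudef]
    congr 1
    show Q.mulVecLin (∑ i, a i • (x i - μ)) = ∑ i, a i • z i
    rw [map_sum]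
    exact Finset.sum_congr rfl fun i _ => by rw [_root_.map_smul]; rfl
  set δ' : Fin n → ℝ := fun i => (x i - μ') ⬝ᵥ Sig⁻¹ *ᵥ (x i - μ') with hδ'def
  have hz' : ∀ i, Q *ᵥ (x i - μ') = z i - c := by
    intro i
    have h1 : x i - μ' = (x i - μ) - (μ' - μ) := by abel
    rw [h1, Matrix.mulVec_sub, hc]
  have hδ'z : ∀ i, δ' i = (z i - c) ⬝ᵥ (z i - c) := fun i => (quad _).trans (by rw [hz' i])
  have hδ'pos : ∀ i, 0 < ν + δ' i := fun i =>
    add_pos_of_pos_of_nonneg hν ((hδ'z i) ▸ hself _)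
  have expand : ∀ v q : Fin d → ℝ, (v - q) ⬝ᵥ (v - q) = v ⬝ᵥ v - 2*(v ⬝ᵥ q) + q ⬝ᵥ q := by
    intro v q
    rw [sub_dotProduct, dotProduct_sub, dotProduct_sub,
      dotProduct_comm q v]
    ring
  set U : ℝ := u ⬝ᵥ u with hUdef
  have hU0 : 0 ≤ U := hself u
  set T : ℝ := 1 - U / A with hTdef
  have hsum_dot : ∀ (f : Fin n → Fin d → ℝ) (v : Fin d → ℝ),
      (∑ i, f i) ⬝ᵥ v = ∑ i, f i ⬝ᵥ v := by
    intro f v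
    simp only [dotProduct, Finset.sum_apply, Finset.sum_mul]
    exact Finset.sum_comm
  have huc : u ⬝ᵥ c = A⁻¹ * U := by rw [hcdef, dotProduct_smul]; rfl
  have hcc : c ⬝ᵥ c = A⁻¹ * (A⁻¹ * U) := by
    rw [hcdef, smul_dotProduct, smul_eq_mul, huc]
  have hzc : ∑ i, a i * (z i ⬝ᵥ c) = A⁻¹ * U := by
    rw [← huc, hudef, hsum_dot]
    exact Finset.sum_congr rfl fun i _ => (smul_dotProduct (a i) (z i) c).symm
  -- the key sum identity
  have hsum : ∑ i, w i * ((ν + δ' i)/(ν + δ i)) = T := by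
    have hterm : ∀ i, w i * ((ν + δ' i)/(ν + δ i))
        = w i + a i * (-2*(z i ⬝ᵥ c) + c ⬝ᵥ c) := by
      intro i
      have h1 : ν + δ' i = (ν + δ i) + (-2*(z i ⬝ᵥ c) + c ⬝ᵥ c) := by
        rw [hδ'z i, expand, hδz i]; ring
      rw [h1, add_div, div_self (hδpos i).ne', mul_add, mul_one, hadef,
        div_mul_eq_mul_div, mul_div_assoc]
    rw [Finset.sum_congr rfl fun i _ => hterm i]
    rw [Finset.sum_add_distrib, hw1]
    have h2 : ∑ i, a i * (-2*(z i ⬝ᵥ c) + c ⬝ᵥ c)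
        = -2 * (∑ i, a i * (z i ⬝ᵥ c)) + A * (c ⬝ᵥ c) := by
      rw [Finset.mul_sum, Finset.sum_mul, ← Finset.sum_add_distrib]
      exact Finset.sum_congr rfl fun i _ => by ring
    rw [h2, hzc, hcc, hTdef]
    field_simp
    ring
  have hTpos : 0 < T := by
    rw [← hsum]
    exact Finset.sum_pos (fun i _ => mul_pos (hw i) (div_pos (hδ'pos i) (hδpos i))) hnem
  -- identify the RHS with T
  have hS1u : S1 = ((d:ℝ) + ν) • u := by rw [hS1]
  have hRHS : 1 - (S1 ⬝ᵥ S1) / (((d : ℝ) + ν) * S0) = T := by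
    rw [hS1u, smul_dotProduct, dotProduct_smul, hS0, hTdef,
      smul_eq_mul, smul_eq_mul, ← hUdef]
    congr 1
    rw [mul_div_mul_left _ _ hd.ne', mul_div_mul_left _ _ hd.ne']
  -- the loss difference
  have hLd : L μ' Sig - L μ Sig = ((d:ℝ) + ν) * ∑ i, w i * Real.log ((ν + δ' i)/(ν + δ i)) := by
    rw [hL μ' Sig, hL μ Sig]
    have h1 : ∀ i, (x i - μ) ⬝ᵥ Sig⁻¹ *ᵥ (x i - μ) = δ i := fun i => (hδ i).symm
    have h2 : ∀ i, (x i - μ') ⬝ᵥ Sig⁻¹ *ᵥ (x i - μ') = δ' i := fun i => rfl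
    simp only [h1, h2]
    have h3 : ∑ i, w i * Real.log ((ν + δ' i)/(ν + δ i))
        = (∑ i, w i * Real.log (ν + δ' i)) - ∑ i, w i * Real.log (ν + δ i) := by
      rw [← Finset.sum_sub_distrib]
      refine Finset.sum_congr rfl fun i _ => ?_
      rw [Real.log_div (hδ'pos i).ne' (hδpos i).ne']
      ring
    rw [h3]
    ring
  -- Jensen's inequality
  have hjen : ∑ i, w i * Real.log ((ν + δ' i)/(ν + δ i)) ≤ Real.log T := by
    have := (strictConcaveOn_log_Ioi.concaveOn).le_map_sum (t := Finset.univ)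
      (p := fun i => (ν + δ' i)/(ν + δ i)) (fun i _ => (hw i).le) hw1
      (fun i _ => Set.mem_Ioi.mpr (div_pos (hδ'pos i) (hδpos i)))
    simpa [smul_eq_mul, hsum] using this
  have hmain : L μ' Sig - L μ Sig ≤ ((d:ℝ) + ν) * Real.log T := by
    rw [hLd]
    exact mul_le_mul_of_nonneg_left hjen hd.le
  have hlogT : Real.log T ≤ 0 :=
    Real.log_nonpos hTpos.le (by rw [hTdef]; exact sub_le_self _ (div_nonneg hU0 hA.le))
  refine ⟨by rw [hRHS]; exact hmain, by rw [hRHS]; exact mul_nonpos_of_nonneg_of_nonpos hd.le hlogT, ?_, ?_⟩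
  · intro heq
    have h0 : (0:ℝ) ≤ ((d:ℝ) + ν) * Real.log T := by
      have := hmain
      rw [heq, sub_self] at this
      linarith
    have hlog0 : Real.log T = 0 := by
      have h1 : ((d:ℝ) + ν) * Real.log T ≤ 0 := mul_nonpos_of_nonneg_of_nonpos hd.le hlogT
      have := le_antisymm h1 h0
      exact (mul_eq_zero.mp this).resolve_left hd.ne'
    have hT1 : T = 1 := by
      rcases Real.log_eq_zero.mp hlog0 with h | h | h
      · exact absurd h hTpos.ne'
      · exact h
      · linarith
    have hU : U = 0 := by
      have : U / A = 0 := by rw [hTdef] at hT1; linarith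
      field_simp at this
      simpa using this
    have hu : u = 0 := dotProduct_self_eq_zero.mp hU
    have hc0 : Q *ᵥ (μ' - μ) = 0 := by rw [hc, hcdef, hu, smul_zero]
    have : μ' - μ = 0 := by
      have h1 : R *ᵥ (Q *ᵥ (μ' - μ)) = μ' - μ := by
        rw [Matrix.mulVec_mulVec, hQdef, Matrix.mul_nonsing_inv R hRdet, Matrix.one_mulVec]
      rw [hc0, Matrix.mulVec_zero] at h1
      exact h1.symm
    exact sub_eq_zero.mp this
  · intro h; rw [h]
end

section
/- The Student-t negative weighted log-likelihood in location-scatter form lifts to a pure scatter problem in dimension d+1: with z_i = (x_i^T,1)^T and A = [[Σ+μμ^T, μ],[μ^T,1]], one has, for ν > 1, L(μ,Σ) = (d̃+ν̃)∑_i w_i log(ν̃ + z_i^T A^{-1} z_i) + log|A| where d̃ = d+1 and ν̃ = ν-1. -/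
open Real Matrix Finset

/-- The Student-t negative weighted log-likelihood in location-scatter form lifts
to a pure scatter problem in dimension `d+1`: with `zᵢ = (xᵢᵀ,1)ᵀ` and
`A = [[Σ+μμᵀ, μ],[μᵀ,1]]`, for `ν > 1`,
`L(μ,Σ) = (d̃+ν̃) ∑ᵢ wᵢ log(ν̃ + zᵢᵀA⁻¹zᵢ) + log|A|` with `d̃ = d+1`, `ν̃ = ν-1`. -/
theorem studentT_likelihood_lift_to_scatter
    (d n : ℕ) (ν : ℝ) (hν : 1 < ν)
    (x : Fin n → Fin d → ℝ)
    (w : Fin n → ℝ) (hw : ∀ i, 0 < w i) (hw1 : ∑ i, w i = 1)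
    (μ : Fin d → ℝ) (Sig : Matrix (Fin d) (Fin d) ℝ) (hSig : Sig.PosDef)
    (A : Matrix (Fin d ⊕ Fin 1) (Fin d ⊕ Fin 1) ℝ)
    (hA : A = Matrix.fromBlocks (Sig + Matrix.vecMulVec μ μ)
      (Matrix.replicateCol (Fin 1) μ) (Matrix.replicateRow (Fin 1) μ) 1)
    (z : Fin n → (Fin d ⊕ Fin 1) → ℝ)
    (hz : ∀ i, z i = Sum.elim (x i) (fun _ => 1)) :
    ((d : ℝ) + ν) * (∑ i, w i * Real.log (ν + (x i - μ) ⬝ᵥ Sig⁻¹ *ᵥ (x i - μ)))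
        + Real.log Sig.det
      = (((d : ℝ) + 1) + (ν - 1)) *
          (∑ i, w i * Real.log ((ν - 1) + z i ⬝ᵥ A⁻¹ *ᵥ z i))
        + Real.log A.det := by
  have hdet : IsUnit Sig.det := isUnit_iff_ne_zero.mpr (ne_of_gt hSig.det_pos)
  -- determinant of A
  have hdetA : A.det = Sig.det := by
    rw [hA, Matrix.det_fromBlocks_one₂₂]
    congr 1
    rw [Matrix.vecMulVec_eq (Fin 1)]
    exact add_sub_cancel_right _ _
  -- explicit inverse of A
  set c : ℝ := μ ⬝ᵥ Sig⁻¹ *ᵥ μ with hc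
  set B : Matrix (Fin d ⊕ Fin 1) (Fin d ⊕ Fin 1) ℝ :=
    Matrix.fromBlocks Sig⁻¹ (-(Matrix.replicateCol (Fin 1) (Sig⁻¹ *ᵥ μ)))
      (-(Matrix.replicateRow (Fin 1) (μ ᵥ* Sig⁻¹))) ((1 + c) • 1) with hBdef
  have hSS : Sig * Sig⁻¹ = 1 := Matrix.mul_nonsing_inv Sig hdet
  have hmul : A * B = 1 := by
    have h11 : (Sig + Matrix.vecMulVec μ μ) * Sig⁻¹
        + Matrix.replicateCol (Fin 1) μ * (-(Matrix.replicateRow (Fin 1) (μ ᵥ* Sig⁻¹))) = 1 := by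
      rw [Matrix.add_mul, hSS, Matrix.vecMulVec_eq (Fin 1),
        Matrix.mul_assoc, ← Matrix.replicateRow_vecMul, Matrix.mul_neg]
      exact add_neg_cancel_right _ _
    have h12 : (Sig + Matrix.vecMulVec μ μ) * (-(Matrix.replicateCol (Fin 1) (Sig⁻¹ *ᵥ μ)))
        + Matrix.replicateCol (Fin 1) μ * ((1 + c) • (1 : Matrix (Fin 1) (Fin 1) ℝ)) = 0 := by
      rw [Matrix.mul_neg, Matrix.add_mul, ← Matrix.replicateCol_mulVec, Matrix.mulVec_mulVec,
        hSS, Matrix.one_mulVec, Matrix.vecMulVec_eq (Fin 1), Matrix.mul_assoc,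
        Matrix.mul_smul, Matrix.mul_one, Matrix.replicateRow_mul_replicateCol]
      ext i j
      simp [Matrix.mul_apply, Matrix.one_apply, hc, Matrix.dotProduct_mulVec μ Sig⁻¹ μ]
      ring
    have h21 : Matrix.replicateRow (Fin 1) μ * Sig⁻¹
        + (1 : Matrix (Fin 1) (Fin 1) ℝ) * (-(Matrix.replicateRow (Fin 1) (μ ᵥ* Sig⁻¹))) = 0 := by
      rw [Matrix.one_mul, ← Matrix.replicateRow_vecMul]
      abel
    have h22 : Matrix.replicateRow (Fin 1) μ * (-(Matrix.replicateCol (Fin 1) (Sig⁻¹ *ᵥ μ)))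
        + (1 : Matrix (Fin 1) (Fin 1) ℝ) * ((1 + c) • (1 : Matrix (Fin 1) (Fin 1) ℝ)) = 1 := by
      rw [Matrix.mul_neg, Matrix.one_mul, Matrix.replicateRow_mul_replicateCol]
      ext i j
      obtain rfl : i = j := Subsingleton.elim i j
      simp [hc, Matrix.dotProduct_mulVec μ Sig⁻¹ μ, Matrix.one_apply_eq]
    rw [hA, hBdef, Matrix.fromBlocks_multiply, h11, h12, h21, h22, Matrix.fromBlocks_one]
  have hAinv : A⁻¹ = B := Matrix.inv_eq_right_inv hmul
  -- quadratic form identity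
  have hquad : ∀ i, (ν - 1) + z i ⬝ᵥ A⁻¹ *ᵥ z i
      = ν + (x i - μ) ⬝ᵥ Sig⁻¹ *ᵥ (x i - μ) := by
    intro i
    rw [hAinv, hz, hBdef, Matrix.fromBlocks_mulVec]
    have h1 : (Sum.elim (x i) (fun _ : Fin 1 => (1:ℝ)) ∘ Sum.inl) = x i := rfl
    have h2 : (Sum.elim (x i) (fun _ : Fin 1 => (1:ℝ)) ∘ Sum.inr) = fun _ => (1:ℝ) := rfl
    rw [h1, h2, sumElim_dotProduct_sumElim]
    have hcol : (-(Matrix.replicateCol (Fin 1) (Sig⁻¹ *ᵥ μ))) *ᵥ (fun _ => (1:ℝ)) = -(Sig⁻¹ *ᵥ μ) := by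
      ext j; simp [Matrix.mulVec, dotProduct]
    have hrow : (-(Matrix.replicateRow (Fin 1) (μ ᵥ* Sig⁻¹))) *ᵥ x i = fun _ => -((μ ᵥ* Sig⁻¹) ⬝ᵥ x i) := by
      ext j; simp [Matrix.mulVec, dotProduct]
    have hsm : ((1 + c) • (1 : Matrix (Fin 1) (Fin 1) ℝ)) *ᵥ (fun _ => (1:ℝ)) = fun _ => 1 + c := by
      ext j; obtain rfl : j = 0 := Subsingleton.elim j 0
      simp [Matrix.mulVec, dotProduct, Matrix.one_apply]
    rw [hcol, hrow, hsm]
    have : (fun _ : Fin 1 => (1:ℝ)) ⬝ᵥ ((fun _ => -((μ ᵥ* Sig⁻¹) ⬝ᵥ x i)) + fun _ => 1 + c)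
        = -((μ ᵥ* Sig⁻¹) ⬝ᵥ x i) + (1 + c) := by
      simp [dotProduct]
    rw [this]
    rw [Matrix.mulVec_sub, sub_dotProduct, dotProduct_sub,
      dotProduct_sub, dotProduct_add, dotProduct_neg,
      hc, ← Matrix.dotProduct_mulVec]
    ring
  simp only [hquad, hdetA]
  ring
end
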